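/- Define h : ℝ → ℝ by h(s) = 1 if s > 0 and h(s) = −s if s ≤ 0; define E : ℝ → ℝ by E(s) = |s|; define Ψ : ℝ × ℝ → ℝ by Ψ(s,t) = 0 if s = t and Ψ(s,t) = −t if s ≠ t. Then h is quasi strongly E-preinvex w.r.t. Ψ on ℝ: for all s, t ∈ ℝ and all α, λ ∈ [0,1], h(α·t + |t| + λ·Ψ(α·s + |s|, α·t + |t|)) ≤ max{h(|s|), h(|t|)}. -/

import Mathlib

noncomputable def hfun (s : ℝ) : ℝ := if s > 0 then 1 else -s

noncomputable def Emap (s : ℝ) : ℝ := |s|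

noncomputable def Psi (p : ℝ × ℝ) : ℝ := if p.1 = p.2 then 0 else -p.2

theorem stmt_13 :
    ∀ s t : ℝ, ∀ α ∈ Set.Icc (0 : ℝ) 1, ∀ μ ∈ Set.Icc (0 : ℝ) 1,
      hfun (α * t + Emap t + μ * Psi (α * s + Emap s, α * t + Emap t)) ≤
        max (hfun (Emap s)) (hfun (Emap t)) := by
  intro s t α hα μ hμ
  obtain ⟨hα0, hα1⟩ := hα
  obtain ⟨hμ0, hμ1⟩ := hμ
  set x : ℝ := α * t + Emap t with hxdef
  have hx : 0 ≤ x := by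
    have h1 : -|t| ≤ t := neg_abs_le t
    have h2 : 0 ≤ |t| := abs_nonneg t
    simp only [hxdef, Emap]
    nlinarith
  -- key facts about hfun
  have hnonneg : ∀ y : ℝ, 0 ≤ y → 0 ≤ hfun y := by
    intro y hy
    unfold hfun
    split <;> linarith
  have key : ∀ y : ℝ, 0 ≤ y → (0 < y → 0 < x) →
      hfun y ≤ max (hfun (Emap s)) (hfun (Emap t)) := by
    intro y hy himp
    rcases lt_or_eq_of_le hy with hpos | heq
    · have hxpos : 0 < x := himp hpos
      have ht : 0 < |t| := by
        by_contra h
        push_neg at h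
        have : t = 0 := abs_nonpos_iff.mp h
        simp [hxdef, Emap, this] at hxpos
      have h1 : hfun y = 1 := by unfold hfun; simp [hpos]
      have h2 : hfun (Emap t) = 1 := by unfold hfun Emap; simp [ht]
      rw [h1]
      exact le_trans (le_of_eq h2.symm) (le_max_right _ _)
    · have h1 : hfun y = 0 := by unfold hfun; simp [← heq]
      rw [h1]
      exact le_trans (hnonneg (Emap s) (abs_nonneg s)) (le_max_left _ _)
  unfold Psi
  by_cases heq : α * s + Emap s = α * t + Emap t
  · rw [if_pos heq, mul_zero, add_zero]
    exact key x hx (fun h => h)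
  · rw [if_neg heq]
    have harg : α * t + Emap t + μ * -(α * t + Emap t) = (1 - μ) * x := by
      rw [hxdef]; ring
    rw [harg]
    apply key
    · have : 0 ≤ 1 - μ := by linarith
      exact mul_nonneg this hx
    · intro h
      nlinarith
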